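/- Let I ⊆ k[x₁,x₂,x₃,x₄] be the ideal generated by x₁² − x₂, x₁³ − x₃, x₁⁴ − x₄, x₁⁶. Then these four generators form a regular sequence (the corresponding subscheme is a complete intersection in affine 4-space), the module I/I² is a free module of rank 4 over k[x₁,x₂,x₃,x₄]/I, and dim_k(I/I²) = 24. -/

import Mathlib

set_option synthInstance.maxHeartbeats 1000000
set_option maxHeartbeats 1000000

open MvPolynomial

/-- The affine ideal `I = (x₁² - x₂, x₁³ - x₃, x₁⁴ - x₄, x₁⁶)` of the projective model
of `spec(A_{1,6})` (with `x_i = X (i-1)`). -/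
noncomputable def affineIdealA16 (k : Type*) [Field k] : Ideal (MvPolynomial (Fin 4) k) :=
  Ideal.span {X 0 ^ 2 - X 1, X 0 ^ 3 - X 2, X 0 ^ 4 - X 3, X 0 ^ 6}

section AuxiliaryLemmasForA16

variable {k : Type*} [Field k]

noncomputable def MonI (k : Type*) [Field k] (t : Set (Fin 4 →₀ ℕ)) : Ideal (MvPolynomial (Fin 4) k) :=
  Ideal.span ((fun e => monomial e (1 : k)) '' t)

lemma monomial_mul_mem_MonI {t : Set (Fin 4 →₀ ℕ)} {d : Fin 4 →₀ ℕ}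
    (hd : ∀ si ∈ t, ∀ j, si j ≠ 0 → d j = 0) {p : MvPolynomial (Fin 4) k}
    (h : (monomial d (1:k)) * p ∈ MonI k t) : p ∈ MonI k t := by
  rw [MonI, mem_ideal_span_monomial_image] at h ⊢
  intro m hm
  have hm' : d + m ∈ ((monomial d (1:k)) * p).support := by
    rw [mem_support_iff, coeff_monomial_mul, one_mul]
    exact mem_support_iff.mp hm
  obtain ⟨si, hsi, hle⟩ := h _ hm'
  refine ⟨si, hsi, fun j => ?_⟩
  rcases eq_or_ne (si j) 0 with h0 | h0
  · simp [h0]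
  · have := hle j
    simp only [Finsupp.coe_add, Pi.add_apply] at this
    have hdj := hd si hsi j h0
    omega

-- X_j * p ∈ MonI t → p ∈ MonI t, when j not appearing in t
lemma X_mul_mem_MonI {t : Set (Fin 4 →₀ ℕ)} {j : Fin 4}
    (hd : ∀ si ∈ t, si j = 0) {p : MvPolynomial (Fin 4) k}
    (h : X j * p ∈ MonI k t) : p ∈ MonI k t := by
  refine monomial_mul_mem_MonI (d := Finsupp.single j 1) ?_ ?_
  · intro si hsi j' hj'
    rw [Finsupp.single_apply]
    split
    · next heq => exact absurd (heq ▸ hd si hsi) hj'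
    · rfl
  · rwa [← X_pow_eq_monomial, pow_one]

lemma smulreg_of (I : Ideal (MvPolynomial (Fin 4) k)) (r : MvPolynomial (Fin 4) k)
    (h : ∀ p, r * p ∈ I → p ∈ I) :
    IsSMulRegular ((MvPolynomial (Fin 4) k) ⧸ (I • ⊤ : Submodule (MvPolynomial (Fin 4) k) (MvPolynomial (Fin 4) k))) r := by
  have hIT : (I • ⊤ : Submodule (MvPolynomial (Fin 4) k) (MvPolynomial (Fin 4) k)) = I := by
    rw [smul_eq_mul, Ideal.mul_top]
  intro a b hab
  obtain ⟨p, rfl⟩ := Submodule.Quotient.mk_surjective _ a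
  obtain ⟨q, rfl⟩ := Submodule.Quotient.mk_surjective _ b
  simp only [← Submodule.Quotient.mk_smul, Submodule.Quotient.eq, hIT] at hab
  rw [Submodule.Quotient.eq, hIT]
  have : r * (p - q) ∈ I := by rwa [mul_sub]
  exact h _ this



lemma mon_single_one (i : Fin 4) : monomial (Finsupp.single i 1) (1:k) = X i := by
  rw [← X_pow_eq_monomial, pow_one]

lemma MonI_empty : MonI k ∅ = ⊥ := by simp [MonI]

lemma MonI_1 : MonI k {Finsupp.single 1 1} = Ideal.span {X 1} := by
  unfold MonI; rw [Set.image_singleton, mon_single_one]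

lemma MonI_12 : MonI k {Finsupp.single 1 1, Finsupp.single 2 1} = Ideal.span {X 1, X 2} := by
  unfold MonI
  rw [Set.image_insert_eq, Set.image_singleton, mon_single_one, mon_single_one]

lemma MonI_123 : MonI k {Finsupp.single 1 1, Finsupp.single 2 1, Finsupp.single 3 1}
    = Ideal.span {X 1, X 2, X 3} := by
  unfold MonI
  rw [Set.image_insert_eq, Set.image_insert_eq, Set.image_singleton,
    mon_single_one, mon_single_one, mon_single_one]

theorem regJ : RingTheory.Sequence.IsRegular (MvPolynomial (Fin 4) k)
    [X 1, X 2, X 3, (X 0 : MvPolynomial (Fin 4) k) ^ 6] := by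
  constructor
  · rw [RingTheory.Sequence.isWeaklyRegular_iff]
    intro i hi
    simp only [List.length_cons, List.length_nil] at hi
    interval_cases i
    · simp only [List.take_zero, List.getElem_cons_zero]
      refine smulreg_of _ _ (fun p hp => ?_)
      rw [show (Ideal.ofList [] : Ideal (MvPolynomial (Fin 4) k)) = ⊥ from Ideal.ofList_nil] at hp ⊢
      rw [← MonI_empty (k := k)] at hp ⊢
      exact X_mul_mem_MonI (fun si hsi => absurd hsi (Set.notMem_empty si)) hp
    · simp only [List.take_succ_cons, List.take_zero,
        List.getElem_cons_succ, List.getElem_cons_zero]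
      have he : Ideal.ofList [(X 1 : MvPolynomial (Fin 4) k)] = MonI k {Finsupp.single 1 1} := by
        rw [MonI_1]; simp [Ideal.span_insert]
      refine smulreg_of _ _ (fun p hp => ?_)
      rw [he] at hp ⊢
      refine X_mul_mem_MonI ?_ hp
      intro si hsi
      rw [Set.mem_singleton_iff] at hsi
      subst hsi
      exact Finsupp.single_eq_of_ne (by decide)
    · simp only [List.take_succ_cons, List.take_zero,
        List.getElem_cons_succ, List.getElem_cons_zero]
      have he : Ideal.ofList [(X 1 : MvPolynomial (Fin 4) k), X 2]
          = MonI k {Finsupp.single 1 1, Finsupp.single 2 1} := by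
        rw [MonI_12]; simp [Ideal.span_insert]
      refine smulreg_of _ _ (fun p hp => ?_)
      rw [he] at hp ⊢
      refine X_mul_mem_MonI ?_ hp
      rintro si (rfl | rfl)
      · exact Finsupp.single_eq_of_ne (by decide)
      · exact Finsupp.single_eq_of_ne (by decide)
    · simp only [List.take_succ_cons, List.take_zero,
        List.getElem_cons_succ, List.getElem_cons_zero]
      have he : Ideal.ofList [(X 1 : MvPolynomial (Fin 4) k), X 2, X 3]
          = MonI k {Finsupp.single 1 1, Finsupp.single 2 1, Finsupp.single 3 1} := by
        rw [MonI_123]; simp [Ideal.span_insert]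
      refine smulreg_of _ _ (fun p hp => ?_)
      rw [he] at hp ⊢
      rw [X_pow_eq_monomial] at hp
      refine monomial_mul_mem_MonI ?_ hp
      rintro si (rfl | rfl | rfl) j hj <;>
        · rw [Finsupp.single_apply_ne_zero] at hj
          obtain ⟨rfl, -⟩ := hj
          exact Finsupp.single_eq_of_ne (by decide)
  · intro h
    have h1 : (1 : MvPolynomial (Fin 4) k) ∈
        Ideal.ofList [X 1, X 2, X 3, (X 0 : MvPolynomial (Fin 4) k) ^ 6] • ⊤ :=
      h ▸ Submodule.mem_top
    rw [smul_eq_mul, Ideal.mul_top] at h1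
    have hle : Ideal.ofList [X 1, X 2, X 3, (X 0 : MvPolynomial (Fin 4) k) ^ 6] ≤
        RingHom.ker (constantCoeff (σ := Fin 4) (R := k)) := by
      simp only [Ideal.ofList_cons, Ideal.ofList_nil, sup_bot_eq, sup_le_iff, Ideal.span_le]
      refine ⟨?_, ?_, ?_, ?_⟩ <;> simp [Set.singleton_subset_iff, RingHom.mem_ker]
    have := hle h1
    simp [RingHom.mem_ker] at this
noncomputable def phiHom : MvPolynomial (Fin 4) k →ₐ[k] MvPolynomial (Fin 4) k :=
  aeval ![X 0, X 0 ^ 2 - X 1, X 0 ^ 3 - X 2, X 0 ^ 4 - X 3]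

lemma phiHom_invol : (phiHom (k := k)).comp phiHom = AlgHom.id k (MvPolynomial (Fin 4) k) := by
  apply MvPolynomial.algHom_ext
  intro i
  fin_cases i <;> simp [phiHom]

noncomputable def phi : MvPolynomial (Fin 4) k ≃ₐ[k] MvPolynomial (Fin 4) k :=
  AlgEquiv.ofAlgHom phiHom phiHom phiHom_invol phiHom_invol

lemma phi_phi (z : MvPolynomial (Fin 4) k) : phi (phi z) = z := by
  have := DFunLike.congr_fun (phiHom_invol (k := k)) z
  simpa [phi] using this

lemma phi_a1 : phi (X 0 ^ 2 - X 1 : MvPolynomial (Fin 4) k) = X 1 := by simp [phi, phiHom]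
lemma phi_a2 : phi (X 0 ^ 3 - X 2 : MvPolynomial (Fin 4) k) = X 2 := by simp [phi, phiHom]
lemma phi_a3 : phi (X 0 ^ 4 - X 3 : MvPolynomial (Fin 4) k) = X 3 := by simp [phi, phiHom]
lemma phi_a4 : phi (X 0 ^ 6 : MvPolynomial (Fin 4) k) = X 0 ^ 6 := by simp [phi, phiHom]
lemma phi_b1 : phi (X 1 : MvPolynomial (Fin 4) k) = X 0 ^ 2 - X 1 := by simp [phi, phiHom]
lemma phi_b2 : phi (X 2 : MvPolynomial (Fin 4) k) = X 0 ^ 3 - X 2 := by simp [phi, phiHom]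
lemma phi_b3 : phi (X 3 : MvPolynomial (Fin 4) k) = X 0 ^ 4 - X 3 := by simp [phi, phiHom]

noncomputable def Jk (k : Type*) [Field k] : Ideal (MvPolynomial (Fin 4) k) :=
  Ideal.span {X 1, X 2, X 3, (X 0 : MvPolynomial (Fin 4) k) ^ 6}

noncomputable def Ik (k : Type*) [Field k] : Ideal (MvPolynomial (Fin 4) k) :=
  Ideal.span {X 0 ^ 2 - X 1, X 0 ^ 3 - X 2, X 0 ^ 4 - X 3, (X 0 : MvPolynomial (Fin 4) k) ^ 6}

lemma map_phi_J : (Jk k).map (phi : MvPolynomial (Fin 4) k ≃ₐ[k] _) = Ik k := by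
  rw [Jk, Ideal.map_span, Ik]
  congr 1
  rw [Set.image_insert_eq, Set.image_insert_eq, Set.image_insert_eq, Set.image_singleton]
  simp only [phi_b1, phi_b2, phi_b3, phi_a4]

lemma map_phi_I : (Ik k).map (phi : MvPolynomial (Fin 4) k ≃ₐ[k] _) = Jk k := by
  rw [Ik, Ideal.map_span, Jk]
  congr 1
  rw [Set.image_insert_eq, Set.image_insert_eq, Set.image_insert_eq, Set.image_singleton]
  simp only [phi_a1, phi_a2, phi_a3, phi_a4]

theorem mem_Ik_iff (z : MvPolynomial (Fin 4) k) : z ∈ Ik k ↔ phi z ∈ Jk k := by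
  constructor
  · intro hz
    rw [← map_phi_I]
    exact Ideal.mem_map_of_mem _ hz
  · intro hz
    have := Ideal.mem_map_of_mem (phi : MvPolynomial (Fin 4) k ≃ₐ[k] _) hz
    rw [map_phi_J] at this
    rwa [phi_phi] at this
lemma X_mem_MonI {t : Set (Fin 4 →₀ ℕ)} {i : Fin 4} (h : Finsupp.single i 1 ∈ t) :
    X i ∈ MonI k t := by
  rw [← mon_single_one]
  exact Ideal.subset_span (Set.mem_image_of_mem _ h)

lemma X0six_mem_MonI {t : Set (Fin 4 →₀ ℕ)} (h : Finsupp.single (0 : Fin 4) 6 ∈ t) :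
    (X 0 : MvPolynomial (Fin 4) k) ^ 6 ∈ MonI k t := by
  rw [X_pow_eq_monomial]
  exact Ideal.subset_span (Set.mem_image_of_mem _ h)

lemma MonI_0six23 : MonI k {Finsupp.single 2 1, Finsupp.single 3 1, Finsupp.single 0 6}
    = Ideal.span {X 2, X 3, (X 0 : MvPolynomial (Fin 4) k) ^ 6} := by
  unfold MonI
  rw [Set.image_insert_eq, Set.image_insert_eq, Set.image_singleton,
    mon_single_one, mon_single_one, ← X_pow_eq_monomial]


lemma MonI_0six13 : MonI k {Finsupp.single 1 1, Finsupp.single 3 1, Finsupp.single 0 6}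
    = Ideal.span {X 1, X 3, (X 0 : MvPolynomial (Fin 4) k) ^ 6} := by
  unfold MonI
  rw [Set.image_insert_eq, Set.image_insert_eq, Set.image_singleton,
    mon_single_one, mon_single_one, ← X_pow_eq_monomial]

lemma MonI_0six12 : MonI k {Finsupp.single 1 1, Finsupp.single 2 1, Finsupp.single 0 6}
    = Ideal.span {X 1, X 2, (X 0 : MvPolynomial (Fin 4) k) ^ 6} := by
  unfold MonI
  rw [Set.image_insert_eq, Set.image_insert_eq, Set.image_singleton,
    mon_single_one, mon_single_one, ← X_pow_eq_monomial]

lemma span_le_Jk {s : Set (MvPolynomial (Fin 4) k)}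
    (hs : s ⊆ {X 1, X 2, X 3, (X 0 : MvPolynomial (Fin 4) k) ^ 6}) :
    Ideal.span s ≤ Jk k := Ideal.span_mono hs

theorem syzJ (c : Fin 4 → MvPolynomial (Fin 4) k)
    (h : ∑ i, c i * (![X 1, X 2, X 3, (X 0 : MvPolynomial (Fin 4) k) ^ 6]) i = 0) :
    ∀ i, c i ∈ Jk k := by
  rw [Fin.sum_univ_four] at h
  simp only [Matrix.cons_val_zero, Matrix.cons_val_one, Matrix.head_cons,
    Matrix.cons_val_two, Matrix.tail_cons, Matrix.cons_val_three] at h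
  intro i
  fin_cases i
  · -- c 0 ∈ Jk : c 0 * X 1 = -(rest)
    have h0 : monomial (Finsupp.single (1 : Fin 4) 1) (1:k) * c 0 =
        -(c 1 * X 2 + c 2 * X 3 + c 3 * X 0 ^ 6) := by
      rw [mon_single_one]; linear_combination h
    have hmem : monomial (Finsupp.single (1 : Fin 4) 1) (1:k) * c 0 ∈
        MonI k {Finsupp.single 2 1, Finsupp.single 3 1, Finsupp.single 0 6} := by
      rw [h0]
      refine neg_mem (add_mem (add_mem ?_ ?_) ?_)
      · exact Ideal.mul_mem_left _ _ (X_mem_MonI (by simp))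
      · exact Ideal.mul_mem_left _ _ (X_mem_MonI (by simp))
      · exact Ideal.mul_mem_left _ _ (X0six_mem_MonI (by simp))
    have := monomial_mul_mem_MonI ?_ hmem
    · refine span_le_Jk ?_ ((MonI_0six23 (k := k)) ▸ this)
      intro x hx; simp at hx ⊢; tauto
    · rintro si (rfl | rfl | rfl) j hj <;>
        · rw [Finsupp.single_apply_ne_zero] at hj
          obtain ⟨rfl, -⟩ := hj
          exact Finsupp.single_eq_of_ne (by decide)
  · -- c 1
    have h0 : monomial (Finsupp.single (2 : Fin 4) 1) (1:k) * c 1 =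
        -(c 0 * X 1 + c 2 * X 3 + c 3 * X 0 ^ 6) := by
      rw [mon_single_one]; linear_combination h
    have hmem : monomial (Finsupp.single (2 : Fin 4) 1) (1:k) * c 1 ∈
        MonI k {Finsupp.single 1 1, Finsupp.single 3 1, Finsupp.single 0 6} := by
      rw [h0]
      refine neg_mem (add_mem (add_mem ?_ ?_) ?_)
      · exact Ideal.mul_mem_left _ _ (X_mem_MonI (by simp))
      · exact Ideal.mul_mem_left _ _ (X_mem_MonI (by simp))
      · exact Ideal.mul_mem_left _ _ (X0six_mem_MonI (by simp))
    have := monomial_mul_mem_MonI ?_ hmem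
    · refine span_le_Jk ?_ ((MonI_0six13 (k := k)) ▸ this)
      intro x hx; simp at hx ⊢; tauto
    · rintro si (rfl | rfl | rfl) j hj <;>
        · rw [Finsupp.single_apply_ne_zero] at hj
          obtain ⟨rfl, -⟩ := hj
          exact Finsupp.single_eq_of_ne (by decide)
  · -- c 2
    have h0 : monomial (Finsupp.single (3 : Fin 4) 1) (1:k) * c 2 =
        -(c 0 * X 1 + c 1 * X 2 + c 3 * X 0 ^ 6) := by
      rw [mon_single_one]; linear_combination h
    have hmem : monomial (Finsupp.single (3 : Fin 4) 1) (1:k) * c 2 ∈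
        MonI k {Finsupp.single 1 1, Finsupp.single 2 1, Finsupp.single 0 6} := by
      rw [h0]
      refine neg_mem (add_mem (add_mem ?_ ?_) ?_)
      · exact Ideal.mul_mem_left _ _ (X_mem_MonI (by simp))
      · exact Ideal.mul_mem_left _ _ (X_mem_MonI (by simp))
      · exact Ideal.mul_mem_left _ _ (X0six_mem_MonI (by simp))
    have := monomial_mul_mem_MonI ?_ hmem
    · refine span_le_Jk ?_ ((MonI_0six12 (k := k)) ▸ this)
      intro x hx; simp at hx ⊢; tauto
    · rintro si (rfl | rfl | rfl) j hj <;>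
        · rw [Finsupp.single_apply_ne_zero] at hj
          obtain ⟨rfl, -⟩ := hj
          exact Finsupp.single_eq_of_ne (by decide)
  · -- c 3
    have h0 : monomial (Finsupp.single (0 : Fin 4) 6) (1:k) * c 3 =
        -(c 0 * X 1 + c 1 * X 2 + c 2 * X 3) := by
      rw [← X_pow_eq_monomial]; linear_combination h
    have hmem : monomial (Finsupp.single (0 : Fin 4) 6) (1:k) * c 3 ∈
        MonI k {Finsupp.single 1 1, Finsupp.single 2 1, Finsupp.single 3 1} := by
      rw [h0]
      refine neg_mem (add_mem (add_mem ?_ ?_) ?_) <;>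
        exact Ideal.mul_mem_left _ _ (X_mem_MonI (by simp))
    have := monomial_mul_mem_MonI ?_ hmem
    · refine span_le_Jk ?_ ((MonI_123 (k := k)) ▸ this)
      intro x hx; simp at hx ⊢; tauto
    · rintro si (rfl | rfl | rfl) j hj <;>
        · rw [Finsupp.single_apply_ne_zero] at hj
          obtain ⟨rfl, -⟩ := hj
          exact Finsupp.single_eq_of_ne (by decide)

theorem exists_cotangent_basis {R : Type*} [CommRing R] {n : ℕ} (g : Fin n → R)
    (J : Ideal R) (hJ : J = Ideal.span (Set.range g))
    (hsyz : ∀ c : Fin n → R, ∑ i, c i * g i = 0 → ∀ i, c i ∈ J) :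
    Nonempty ((Fin n → R ⧸ J) ≃ₗ[R ⧸ J] J.Cotangent) := by
  have hg : ∀ i, g i ∈ J := fun i => hJ ▸ Ideal.subset_span (Set.mem_range_self i)
  let v : Fin n → J.Cotangent := fun i => J.toCotangent ⟨g i, hg i⟩
  let F : (Fin n → R ⧸ J) →ₗ[R ⧸ J] J.Cotangent := Fintype.linearCombination (R ⧸ J) v
  have hFapply : ∀ (r : Fin n → R), F (fun i => Ideal.Quotient.mk J (r i)) =
      J.toCotangent ⟨∑ i, r i * g i, Ideal.sum_mem J (fun i _ => Ideal.mul_mem_left _ _ (hg i))⟩ := by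
    intro r
    rw [Fintype.linearCombination_apply]
    have : ∀ i, (Ideal.Quotient.mk J (r i)) • v i = J.toCotangent (r i • ⟨g i, hg i⟩) := by
      intro i
      rw [map_smul]
      rfl
    rw [Finset.sum_congr rfl (fun i _ => this i), ← map_sum]
    congr 1
    ext
    simp [Finset.sum_apply', smul_eq_mul]
  have hdecomp : ∀ z ∈ J ^ 2, ∃ d : Fin n → R, (∀ i, d i ∈ J) ∧ z = ∑ i, d i * g i := by
    intro z hz
    rw [pow_two] at hz
    refine Submodule.mul_induction_on hz ?_ ?_
    · intro m hm b hb
      rw [hJ] at hb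
      obtain ⟨e, he⟩ := (Submodule.mem_span_range_iff_exists_fun R).mp hb
      refine ⟨fun i => m * e i, fun i => Ideal.mul_mem_right _ _ hm, ?_⟩
      rw [← he, Finset.mul_sum]
      exact Finset.sum_congr rfl fun i _ => by rw [smul_eq_mul, mul_assoc]
    · rintro x y ⟨d, hd, rfl⟩ ⟨d', hd', rfl⟩
      exact ⟨fun i => d i + d' i, fun i => J.add_mem (hd i) (hd' i),
        by rw [← Finset.sum_add_distrib]; exact Finset.sum_congr rfl fun i _ => (add_mul _ _ _).symm⟩
  have hsurj : Function.Surjective F := by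
    intro z
    obtain ⟨w, rfl⟩ := J.toCotangent_surjective z
    have hw : (w : R) ∈ Ideal.span (Set.range g) := hJ ▸ w.2
    obtain ⟨c, hc⟩ := (Submodule.mem_span_range_iff_exists_fun R).mp hw
    refine ⟨fun i => Ideal.Quotient.mk J (c i), ?_⟩
    rw [hFapply]
    congr 1
    ext
    simpa [smul_eq_mul] using hc
  have hinj : Function.Injective F := by
    rw [injective_iff_map_eq_zero]
    intro c hc
    choose r hr using fun i => Ideal.Quotient.mk_surjective (c i)
    have hc' : F (fun i => Ideal.Quotient.mk J (r i)) = 0 := by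
      rw [show (fun i => Ideal.Quotient.mk J (r i)) = c from funext hr]
      exact hc
    rw [hFapply, Ideal.toCotangent_eq_zero] at hc'
    obtain ⟨d, hd, hsum⟩ := hdecomp _ hc'
    have hz : ∑ i, (r i - d i) * g i = 0 := by
      simp only [sub_mul]
      rw [Finset.sum_sub_distrib, ← hsum, sub_self]
    have hmem : ∀ i, r i - d i ∈ J := hsyz _ hz
    funext i
    rw [← hr i, Pi.zero_apply, Ideal.Quotient.eq_zero_iff_mem]
    simpa using J.add_mem (hmem i) (hd i)
  exact ⟨LinearEquiv.ofBijective F ⟨hinj, hsurj⟩⟩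
theorem syzI (c : Fin 4 → MvPolynomial (Fin 4) k)
    (h : ∑ i, c i * (![X 0 ^ 2 - X 1, X 0 ^ 3 - X 2, X 0 ^ 4 - X 3,
      (X 0 : MvPolynomial (Fin 4) k) ^ 6]) i = 0) :
    ∀ i, c i ∈ Ik k := by
  have h2 : ∑ i, (fun i => phi (c i)) i * (![X 1, X 2, X 3,
      (X 0 : MvPolynomial (Fin 4) k) ^ 6]) i = 0 := by
    rw [Fin.sum_univ_four] at h ⊢
    simp only [Matrix.cons_val_zero, Matrix.cons_val_one, Matrix.head_cons,
      Matrix.cons_val_two, Matrix.tail_cons, Matrix.cons_val_three] at h ⊢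
    have := congrArg (phi (k := k)) h
    simpa only [map_add, map_mul, map_zero, phi_a1, phi_a2, phi_a3, phi_a4] using this
  intro i
  rw [mem_Ik_iff]
  exact syzJ _ h2 i

lemma Ik_span_range : Ik k = Ideal.span (Set.range ![X 0 ^ 2 - X 1, X 0 ^ 3 - X 2,
    X 0 ^ 4 - X 3, (X 0 : MvPolynomial (Fin 4) k) ^ 6]) := by
  unfold Ik
  congr 1
  ext x
  simp only [Set.mem_insert_iff, Set.mem_singleton_iff, Set.mem_range, Fin.exists_fin_succ,
    Fin.exists_fin_zero_pi, Matrix.cons_val_zero, Matrix.cons_val_one, Matrix.head_cons,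
    Matrix.cons_val_two, Matrix.tail_cons, Matrix.cons_val_three]
  constructor
  · rintro (rfl | rfl | rfl | rfl)
    · exact Or.inl rfl
    · exact Or.inr (Or.inl rfl)
    · exact Or.inr (Or.inr (Or.inl rfl))
    · exact Or.inr (Or.inr (Or.inr (Or.inl rfl)))
  · rintro (rfl | rfl | rfl | rfl | h)
    · exact Or.inl rfl
    · exact Or.inr (Or.inl rfl)
    · exact Or.inr (Or.inr (Or.inl rfl))
    · exact Or.inr (Or.inr (Or.inr rfl))
    · exact absurd h (by simp)

theorem exists_Ik_equiv : Nonempty ((Fin 4 → MvPolynomial (Fin 4) k ⧸ Ik k)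
    ≃ₗ[MvPolynomial (Fin 4) k ⧸ Ik k] (Ik k).Cotangent) :=
  exists_cotangent_basis _ _ Ik_span_range syzI
lemma X0sq_sub_mem : (X 0 ^ 2 - X 1 : MvPolynomial (Fin 4) k) ∈ Ik k :=
  Ideal.subset_span (by simp)
lemma X0cu_sub_mem : (X 0 ^ 3 - X 2 : MvPolynomial (Fin 4) k) ∈ Ik k :=
  Ideal.subset_span (by simp)
lemma X0fo_sub_mem : (X 0 ^ 4 - X 3 : MvPolynomial (Fin 4) k) ∈ Ik k :=
  Ideal.subset_span (by simp)
lemma X0six_mem : (X 0 ^ 6 : MvPolynomial (Fin 4) k) ∈ Ik k :=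
  Ideal.subset_span (by simp)

noncomputable def rootv : Fin 4 → AdjoinRoot ((Polynomial.X : Polynomial k) ^ 6) :=
  ![AdjoinRoot.root _, AdjoinRoot.root _ ^ 2, AdjoinRoot.root _ ^ 3, AdjoinRoot.root _ ^ 4]

lemma root_pow_six : (AdjoinRoot.root ((Polynomial.X : Polynomial k) ^ 6)) ^ 6 = 0 := by
  have h := AdjoinRoot.aeval_eq (f := (Polynomial.X : Polynomial k) ^ 6)
    ((Polynomial.X : Polynomial k) ^ 6)
  rw [AdjoinRoot.mk_self, map_pow, Polynomial.aeval_X] at h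
  exact h

noncomputable def f1 : AdjoinRoot ((Polynomial.X : Polynomial k) ^ 6)
    →ₐ[k] (MvPolynomial (Fin 4) k ⧸ Ik k) :=
  AdjoinRoot.liftAlgHom _ (Algebra.ofId k _) (Ideal.Quotient.mk (Ik k) (X 0)) (by
    rw [Polynomial.eval₂_X_pow, ← map_pow, Ideal.Quotient.eq_zero_iff_mem]
    exact X0six_mem)

noncomputable def f2 : (MvPolynomial (Fin 4) k ⧸ Ik k)
    →ₐ[k] AdjoinRoot ((Polynomial.X : Polynomial k) ^ 6) :=
  Ideal.Quotient.liftₐ (Ik k) (aeval (rootv (k := k))) (by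
    intro a ha
    have hle : Ik k ≤ RingHom.ker (aeval (R := k) (rootv (k := k))).toRingHom := by
      rw [Ik, Ideal.span_le]
      rintro x hx
      simp only [Set.mem_insert_iff, Set.mem_singleton_iff] at hx
      rcases hx with rfl | rfl | rfl | rfl <;>
        simp [RingHom.mem_ker, rootv, root_pow_six, ← pow_mul]
    exact RingHom.mem_ker.mp (hle ha))

lemma f1_f2 : (f1 (k := k)).comp f2 = AlgHom.id k _ := by
  apply Ideal.Quotient.algHom_ext
  apply MvPolynomial.algHom_ext
  intro i
  have h2 := X0sq_sub_mem (k := k); have h3 := X0cu_sub_mem (k := k)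
  have h4 := X0fo_sub_mem (k := k)
  have hf2 : ∀ x, f2 (k := k) (Ideal.Quotient.mk _ x) = aeval rootv x := fun _ => rfl
  fin_cases i <;>
    simp [f1, hf2, rootv, Ideal.Quotient.mkₐ_eq_mk] <;>
    rw [← map_pow, Ideal.Quotient.mk_eq_mk_iff_sub_mem] <;>
    assumption

lemma f2_f1 : (f2 (k := k)).comp f1 = AlgHom.id k _ := by
  apply AdjoinRoot.algHom_ext
  have hf2 : ∀ x, f2 (k := k) (Ideal.Quotient.mk _ x) = aeval rootv x := fun _ => rfl
  simp [f1, hf2, rootv]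

noncomputable def psi : AdjoinRoot ((Polynomial.X : Polynomial k) ^ 6)
    ≃ₐ[k] (MvPolynomial (Fin 4) k ⧸ Ik k) :=
  AlgEquiv.ofAlgHom f1 f2 f1_f2 f2_f1

noncomputable def basisRI : Module.Basis (Fin 6) k (MvPolynomial (Fin 4) k ⧸ Ik k) :=
  (((AdjoinRoot.powerBasis' (Polynomial.monic_X_pow 6 (R := k))).basis.map
    psi.toLinearEquiv).reindex (finCongr (by simp)))
lemma Ik_ne_top : Ik k ≠ ⊤ := by
  intro h
  have h1 : (1 : MvPolynomial (Fin 4) k) ∈ Ik k := h ▸ Submodule.mem_top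
  have hle : Ik k ≤ RingHom.ker (constantCoeff (σ := Fin 4) (R := k)) := by
    rw [Ik, Ideal.span_le]
    rintro x hx
    simp only [Set.mem_insert_iff, Set.mem_singleton_iff] at hx
    rcases hx with rfl | rfl | rfl | rfl <;> simp [RingHom.mem_ker]
  have := hle h1
  simp [RingHom.mem_ker] at this

theorem regI : RingTheory.Sequence.IsRegular (MvPolynomial (Fin 4) k)
    [X 0 ^ 2 - X 1, X 0 ^ 3 - X 2, X 0 ^ 4 - X 3, (X 0 : MvPolynomial (Fin 4) k) ^ 6] := by
  have hcongr := AddEquiv.isRegular_congr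
    (e := (phi (k := k)).toRingEquiv.toAddEquiv)
    (as := [X 0 ^ 2 - X 1, X 0 ^ 3 - X 2, X 0 ^ 4 - X 3, (X 0 : MvPolynomial (Fin 4) k) ^ 6])
    (bs := [X 1, X 2, X 3, (X 0 : MvPolynomial (Fin 4) k) ^ 6])
    (by
      refine .cons (fun x => ?_) (.cons (fun x => ?_) (.cons (fun x => ?_)
        (.cons (fun x => ?_) .nil))) <;>
        · show phi _ = _
          rw [smul_eq_mul, smul_eq_mul, map_mul]
          first
            | rw [phi_a1] | rw [phi_a2] | rw [phi_a3] | rw [phi_a4]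
          rfl)
  exact hcongr.mpr regJ

end AuxiliaryLemmasForA16

/-- Let `I ⊆ k[x₁,x₂,x₃,x₄]` be the ideal generated by
`x₁² - x₂, x₁³ - x₃, x₁⁴ - x₄, x₁⁶`.  Then these four generators form a regular
sequence (the corresponding subscheme is a complete intersection in affine `4`-space),
`I/I²` is a free module of rank `4` over `k[x₁,…,x₄]/I`, and `dim_k I/I² = 24`
(realising `I/I²` as the image of `I` in `k[x₁,…,x₄]/I²`). -/
theorem affineIdealA16_complete_intersection
    (k : Type*) [Field k] [IsAlgClosed k]
    (hchar2 : (2 : k) ≠ 0) (hchar3 : (3 : k) ≠ 0) :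
    RingTheory.Sequence.IsRegular (MvPolynomial (Fin 4) k)
        [X 0 ^ 2 - X 1, X 0 ^ 3 - X 2, X 0 ^ 4 - X 3, (X 0 : MvPolynomial (Fin 4) k) ^ 6] ∧
      Module.Free (MvPolynomial (Fin 4) k ⧸ affineIdealA16 k) (affineIdealA16 k).Cotangent ∧
      Module.finrank (MvPolynomial (Fin 4) k ⧸ affineIdealA16 k)
        (affineIdealA16 k).Cotangent = 4 ∧
      Module.finrank k
        (((affineIdealA16 k).map
          (Ideal.Quotient.mk ((affineIdealA16 k) ^ 2))).restrictScalars k) = 24 := by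
  have hIk : affineIdealA16 k = Ik k := rfl
  obtain ⟨E⟩ := exists_Ik_equiv (k := k)
  let bC : Module.Basis (Fin 4) (MvPolynomial (Fin 4) k ⧸ Ik k) (Ik k).Cotangent :=
    Module.Basis.ofEquivFun E.symm
  haveI : Nontrivial (MvPolynomial (Fin 4) k ⧸ Ik k) := Ideal.Quotient.nontrivial_iff.mpr Ik_ne_top
  refine ⟨regI, ?_, ?_, ?_⟩
  · rw [hIk]; exact Module.Free.of_basis bC
  · rw [hIk, Module.finrank_eq_card_basis bC, Fintype.card_fin]
  · rw [hIk]
    have hmapeq : (Ik k).map (Ideal.Quotient.mk ((Ik k) ^ 2)) = (Ik k).cotangentIdeal := by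
      ext x
      rw [Ideal.mem_map_iff_of_surjective _ Ideal.Quotient.mk_surjective]
      constructor
      · rintro ⟨y, hy, rfl⟩; exact Submodule.mem_map_of_mem hy
      · rintro ⟨y, hy, rfl⟩; exact ⟨y, hy, rfl⟩
    rw [hmapeq]
    have e1 : (((Ik k).cotangentIdeal).restrictScalars k) ≃ₗ[k] (Ik k).cotangentIdeal :=
      (Submodule.restrictScalarsEquiv k _ _ ((Ik k).cotangentIdeal)).restrictScalars k
    have e2 : (Ik k).Cotangent ≃ₗ[k] (Ik k).cotangentIdeal :=
      (Ik k).cotangentEquivIdeal.restrictScalars k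
    haveI : IsScalarTower k (MvPolynomial (Fin 4) k ⧸ Ik k) (Ik k).Cotangent := ⟨fun a b c => by
      obtain ⟨y, rfl⟩ := Ideal.Quotient.mk_surjective b
      have h1 : ∀ z : MvPolynomial (Fin 4) k, (Ideal.Quotient.mk (Ik k) z) • c = z • c := fun z => by
        rw [← Ideal.Quotient.algebraMap_eq, algebraMap_smul]
      rw [← Ideal.Quotient.mkₐ_eq_mk k, ← map_smul, Ideal.Quotient.mkₐ_eq_mk, h1, h1, smul_assoc]⟩
    have bK : Module.Basis (Fin 6 × Fin 4) k (Ik k).Cotangent := Module.Basis.smulTower basisRI bC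
    rw [LinearEquiv.finrank_eq e1, ← LinearEquiv.finrank_eq e2, Module.finrank_eq_card_basis bK]
    simp
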